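/- Let A be a Novikov algebra, I a two-sided ideal of A, and M an ideal of the algebra I such that the quotient algebra I/M is semiprime. Then M is a two-sided ideal of A. -/

import Mathlib

/-- The associator `(a,b,c) = (ab)c - a(bc)`. -/
def asc {A : Type*} [NonUnitalNonAssocRing A] (a b c : A) : A := a * b * c - a * (b * c)

/-- Membership in the nucleus `N(A)`. -/
def inNuc {A : Type*} [NonUnitalNonAssocRing A] (n : A) : Prop :=
  ∀ a b : A, asc n a b = 0 ∧ asc a n b = 0 ∧ asc a b n = 0

/-- Lemma 6: if `I ⊴ A`, `M ⊴ I` and the quotient algebra `I/M` is semiprime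
(i.e. every ideal `T` of `I` containing `M` with `T² ⊆ M` satisfies `T ≤ M`),
then `M` is a two-sided ideal of `A`. -/
theorem novikov_quotient_semiprime_ideal {A : Type*} [NonUnitalNonAssocRing A]
    (hsym : ∀ a b c : A, asc a b c = asc b a c)
    (hrc : ∀ a b c : A, a * b * c = a * c * b)
    (I : AddSubgroup A) (hI : ∀ i ∈ I, ∀ a : A, a * i ∈ I ∧ i * a ∈ I)
    (M : AddSubgroup A) (hMI : M ≤ I)
    (hM : ∀ m ∈ M, ∀ i ∈ I, i * m ∈ M ∧ m * i ∈ M)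
    (hquot : ∀ T : AddSubgroup A, T ≤ I → M ≤ T →
      (∀ t ∈ T, ∀ i ∈ I, i * t ∈ T ∧ t * i ∈ T) →
      (∀ t ∈ T, ∀ s ∈ T, t * s ∈ M) → T ≤ M) :
    ∀ m ∈ M, ∀ a : A, m * a ∈ M ∧ a * m ∈ M := by
  -- derived identity from left symmetry of the associator
  have key : ∀ x y z : A, x * (y * z) = x * y * z - y * x * z + y * (x * z) := by
    intro x y z
    have h := hsym x y z
    unfold asc at h
    have h2 : x * (y * z) = x * y * z - (y * x * z - y * (x * z)) := by
      rw [← h]; abel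
    rw [h2]; abel
  -- Step 1 : A·M ⊆ M
  have hAM : ∀ m ∈ M, ∀ a : A, a * m ∈ M := by
    intro m hm a
    set S : Set A := (M : Set A) ∪ {x | ∃ b : A, ∃ n ∈ M, x = b * n} with hS
    set T := AddSubgroup.closure S with hT
    have hMT : M ≤ T := fun x hx => AddSubgroup.subset_closure (Or.inl hx)
    have hTI : T ≤ I := by
      rw [hT, AddSubgroup.closure_le]
      rintro x (hx | ⟨b, n, hn, rfl⟩)
      · exact hMI hx
      · exact (hI n (hMI hn) b).1
    have hPw : ∀ t ∈ T, ∀ w ∈ I, t * w ∈ M := by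
      intro t ht
      induction ht using AddSubgroup.closure_induction with
      | mem x hx =>
        rcases hx with hx | ⟨b, n, hn, rfl⟩
        · exact fun w hw => (hM x hx w hw).2
        · intro w hw
          rw [hrc b n w]
          exact (hM n hn (b * w) (hI w hw b).1).1
      | zero => intro w hw; rw [zero_mul]; exact M.zero_mem
      | add x y hx hy px py =>
        intro w hw; rw [add_mul]; exact M.add_mem (px w hw) (py w hw)
      | neg x hx px =>
        intro w hw; rw [neg_mul]; exact M.neg_mem (px w hw)
    have hIdeal : ∀ t ∈ T, ∀ i ∈ I, i * t ∈ T ∧ t * i ∈ T := by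
      intro t ht
      have hleft : ∀ i ∈ I, i * t ∈ T := by
        induction ht using AddSubgroup.closure_induction with
        | mem x hx =>
          rcases hx with hx | ⟨b, n, hn, rfl⟩
          · exact fun i hi => hMT (hM x hx i hi).1
          · intro i hi
            rw [key i b n]
            refine T.add_mem (T.sub_mem ?_ ?_) ?_
            · exact hMT (hM n hn (i * b) (hI i hi b).2).1
            · exact hMT (hM n hn (b * i) (hI i hi b).1).1
            · exact AddSubgroup.subset_closure (Or.inr ⟨b, i * n, (hM n hn i hi).1, rfl⟩)
        | zero => intro i hi; rw [mul_zero]; exact T.zero_mem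
        | add x y hx hy px py =>
          intro i hi; rw [mul_add]; exact T.add_mem (px i hi) (py i hi)
        | neg x hx px =>
          intro i hi; rw [mul_neg]; exact T.neg_mem (px i hi)
      exact fun i hi => ⟨hleft i hi, hMT (hPw t ht i hi)⟩
    have hSq : ∀ t ∈ T, ∀ s ∈ T, t * s ∈ M := fun t ht s hs => hPw t ht s (hTI hs)
    exact hquot T hTI hMT hIdeal hSq (AddSubgroup.subset_closure (Or.inr ⟨a, m, hm, rfl⟩))
  -- Step 2 : M·A ⊆ M
  have hMA : ∀ m ∈ M, ∀ a : A, m * a ∈ M := by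
    intro m hm a
    set S : Set A := (M : Set A) ∪ {x | ∃ n ∈ M, ∃ b : A, x = n * b} with hS
    set T := AddSubgroup.closure S with hT
    have hMT : M ≤ T := fun x hx => AddSubgroup.subset_closure (Or.inl hx)
    have hTI : T ≤ I := by
      rw [hT, AddSubgroup.closure_le]
      rintro x (hx | ⟨n, hn, b, rfl⟩)
      · exact hMI hx
      · exact (hI n (hMI hn) b).2
    have hPw : ∀ t ∈ T, ∀ w ∈ I, t * w ∈ M := by
      intro t ht
      induction ht using AddSubgroup.closure_induction with
      | mem x hx =>
        rcases hx with hx | ⟨n, hn, b, rfl⟩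
        · exact fun w hw => (hM x hx w hw).2
        · intro w hw
          -- n*b*w = n*(b*w) + b*n*w - b*(n*w)
          have h2 : n * b * w = n * (b * w) + b * n * w - b * (n * w) := by
            rw [key n b w]; abel
          rw [h2]
          refine M.sub_mem (M.add_mem ?_ ?_) ?_
          · exact (hM n hn (b * w) (hI w hw b).1).2
          · exact (hM (b * n) (hAM n hn b) w hw).2
          · exact hAM (n * w) ((hM n hn w hw).2) b
      | zero => intro w hw; rw [zero_mul]; exact M.zero_mem
      | add x y hx hy px py =>
        intro w hw; rw [add_mul]; exact M.add_mem (px w hw) (py w hw)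
      | neg x hx px =>
        intro w hw; rw [neg_mul]; exact M.neg_mem (px w hw)
    have hIdeal : ∀ t ∈ T, ∀ i ∈ I, i * t ∈ T ∧ t * i ∈ T := by
      intro t ht
      have hleft : ∀ i ∈ I, i * t ∈ T := by
        induction ht using AddSubgroup.closure_induction with
        | mem x hx =>
          rcases hx with hx | ⟨n, hn, b, rfl⟩
          · exact fun i hi => hMT (hM x hx i hi).1
          · intro i hi
            rw [key i n b]
            refine T.add_mem (T.sub_mem ?_ ?_) ?_
            · exact AddSubgroup.subset_closure (Or.inr ⟨i * n, (hM n hn i hi).1, b, rfl⟩)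
            · exact AddSubgroup.subset_closure (Or.inr ⟨n * i, (hM n hn i hi).2, b, rfl⟩)
            · exact hMT (hM n hn (i * b) (hI i hi b).2).2
        | zero => intro i hi; rw [mul_zero]; exact T.zero_mem
        | add x y hx hy px py =>
          intro i hi; rw [mul_add]; exact T.add_mem (px i hi) (py i hi)
        | neg x hx px =>
          intro i hi; rw [mul_neg]; exact T.neg_mem (px i hi)
      exact fun i hi => ⟨hleft i hi, hMT (hPw t ht i hi)⟩
    have hSq : ∀ t ∈ T, ∀ s ∈ T, t * s ∈ M := fun t ht s hs => hPw t ht s (hTI hs)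
    exact hquot T hTI hMT hIdeal hSq (AddSubgroup.subset_closure (Or.inr ⟨m, hm, a, rfl⟩))
  exact fun m hm a => ⟨hMA m hm a, hAM m hm a⟩
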